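/- Every algebraic complete OML with the covering property is modular: if L is a complete OML that is algebraic and has the covering property, then for all x, y, z ∈ L with x ≤ z, x ⊔ (y ⊓ z) = (x ⊔ y) ⊓ z. -/

import Mathlib

/-- A complete orthomodular lattice. -/
class CompleteOML (α : Type*) extends CompleteLattice α, Compl α where
  compl_compl : ∀ x : α, xᶜᶜ = x
  compl_antitone : ∀ x y : α, x ≤ y → yᶜ ≤ xᶜ
  inf_compl : ∀ x : α, x ⊓ xᶜ = ⊥
  sup_compl : ∀ x : α, x ⊔ xᶜ = ⊤
  orthomodular : ∀ x y : α, x ≤ y → x ⊔ (xᶜ ⊓ y) = y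

/-- A complete lattice is algebraic if every element is the supremum of the compact
elements below it. -/
def IsAlgebraicLattice (α : Type*) [CompleteLattice α] : Prop :=
  ∀ x : α, x = sSup {c : α | IsCompactElement c ∧ c ≤ x}

set_option linter.unusedSectionVars false

namespace OMLHelper

open CompleteLattice (isCompactElement_iff_le_of_directed_sSup_le)

variable {α : Type*} [CompleteOML α]

lemma cc (x : α) : xᶜᶜ = x := CompleteOML.compl_compl x

lemma canti {x y : α} (h : x ≤ y) : yᶜ ≤ xᶜ := CompleteOML.compl_antitone x y h

lemma om {x y : α} (h : x ≤ y) : x ⊔ (xᶜ ⊓ y) = y := CompleteOML.orthomodular x y h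

lemma icpl (x : α) : x ⊓ xᶜ = ⊥ := CompleteOML.inf_compl x

lemma flip1 {x y : α} (h : x ≤ yᶜ) : y ≤ xᶜ := by
  have := canti h; rwa [cc] at this

lemma demorgan_sup (x y : α) : (x ⊔ y)ᶜ = xᶜ ⊓ yᶜ := by
  apply le_antisymm
  · exact le_inf (canti le_sup_left) (canti le_sup_right)
  · have h : x ⊔ y ≤ (xᶜ ⊓ yᶜ)ᶜ :=
      sup_le (flip1 inf_le_left) (flip1 inf_le_right)
    have := canti h; rwa [cc] at this

lemma demorgan_inf (x y : α) : (x ⊓ y)ᶜ = xᶜ ⊔ yᶜ := by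
  have h := demorgan_sup xᶜ yᶜ
  rw [cc, cc] at h
  rw [← h, cc]

/-- Dual orthomodular law. -/
lemma omd {x y : α} (h : x ≤ y) : y ⊓ (yᶜ ⊔ x) = x := by
  have h2 := om (canti h)
  rw [cc] at h2
  have h3 := congrArg (·ᶜ) h2
  simp only [demorgan_sup, demorgan_inf, cc] at h3
  exact h3

lemma rel_inf {x t : α} (h : t ≤ xᶜ) : xᶜ ⊓ (x ⊔ t) = t := by
  have := omd (x := t) (y := xᶜ) h
  rwa [cc] at this

/-- helper: from a covering, conclude equality. -/
lemma covBy_eq {a b c : α} (h : a ⋖ b) (h1 : a < c) (h2 : c ≤ b) : c = b := by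
  by_contra hne
  exact h.2 h1 (lt_of_le_of_ne h2 hne)

section Algebraic

variable (halg : IsAlgebraicLattice α)

include halg

/-- In an algebraic lattice, atoms are compact. -/
lemma atom_compact {p : α} (hp : IsAtom p) : IsCompactElement p := by
  by_contra hnc
  have h := halg p
  have hle : sSup {c : α | IsCompactElement c ∧ c ≤ p} ≤ ⊥ := by
    apply sSup_le
    rintro c ⟨hc1, hc2⟩
    rcases lt_or_eq_of_le hc2 with h' | h'
    · exact (hp.2 c h').le
    · exact absurd (h' ▸ hc1) hnc
  exact hp.1 (le_bot_iff.mp (h ▸ hle))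

/-- Every nonzero element has a nonzero compact element below it. -/
lemma exists_compact_le {x : α} (hx : x ≠ ⊥) :
    ∃ c : α, IsCompactElement c ∧ c ≤ x ∧ c ≠ ⊥ := by
  by_contra hc
  push_neg at hc
  have hle : sSup {c : α | IsCompactElement c ∧ c ≤ x} ≤ ⊥ := by
    apply sSup_le
    rintro c ⟨hc1, hc2⟩
    exact le_bot_iff.mpr (hc c hc1 hc2)
  exact hx (le_bot_iff.mp ((halg x) ▸ hle))

omit halg in
/-- Every nonzero compact element has a coatom (of its interval) below it. -/
lemma compact_covby {k : α} (hk : IsCompactElement k) (hk0 : k ≠ ⊥) :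
    ∃ m : α, m ⋖ k := by
  have hch : ∀ c ⊆ Set.Iio k, IsChain (· ≤ ·) c → ∀ y ∈ c, ∃ ub ∈ Set.Iio k, ∀ z ∈ c, z ≤ ub := by
    intro c hcs hchain y hy
    refine ⟨sSup c, ?_, fun z hz => le_sSup hz⟩
    have hsle : sSup c ≤ k := sSup_le fun z hz => (hcs hz).le
    rcases lt_or_eq_of_le hsle with h | h
    · exact h
    · exfalso
      have hdir : DirectedOn (· ≤ ·) c := IsChain.directedOn hchain
      obtain ⟨w, hw, hkw⟩ :=
        (isCompactElement_iff_le_of_directed_sSup_le (α := α) k).mp hk c ⟨y, hy⟩ hdir h.ge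
      exact absurd (lt_of_le_of_lt hkw (hcs hw)) (lt_irrefl k)
  obtain ⟨m, _, hmax⟩ := zorn_le_nonempty₀ (Set.Iio k) hch ⊥ (bot_lt_iff_ne_bot.mpr hk0)
  refine ⟨m, hmax.prop, fun c hc1 hc2 => ?_⟩
  have := hmax.eq_of_le (y := c) hc2 hc1.le
  exact absurd (this ▸ hc1) (lt_irrefl m)

omit halg in
lemma atom_below_compact {k : α} (hk : IsCompactElement k) (hk0 : k ≠ ⊥) :
    ∃ p : α, IsAtom p ∧ p ≤ k := by
  obtain ⟨m, hm⟩ := compact_covby hk hk0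
  have hmk : m ≤ k := hm.lt.le
  have hsup : m ⊔ (mᶜ ⊓ k) = k := om hmk
  set a := mᶜ ⊓ k with ha
  have ha0 : a ≠ ⊥ := by
    intro h
    rw [h, sup_bot_eq] at hsup
    exact absurd hsup hm.lt.ne
  refine ⟨a, ⟨ha0, fun b hb => ?_⟩, inf_le_right⟩
  have hbm : b ≤ mᶜ := le_trans hb.le inf_le_left
  by_cases hbk : m ⊔ b = k
  · exfalso
    have : mᶜ ⊓ (m ⊔ b) = b := rel_inf hbm
    rw [hbk] at this
    exact absurd this.symm hb.ne
  · have hmb : m ⊔ b = m := by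
      rcases lt_or_eq_of_le (le_sup_left : m ≤ m ⊔ b) with h | h
      · exact absurd (covBy_eq hm h (by rw [← hsup]; exact sup_le le_sup_left (le_trans hb.le le_sup_right))) hbk
      · exact h.symm
    have hbm' : b ≤ m := le_trans le_sup_right hmb.le
    have : b ≤ m ⊓ mᶜ := le_inf hbm' hbm
    rw [icpl] at this
    exact le_bot_iff.mp this

lemma exists_atom_le {x : α} (hx : x ≠ ⊥) : ∃ p : α, IsAtom p ∧ p ≤ x := by
  obtain ⟨c, hc, hcx, hc0⟩ := exists_compact_le halg hx
  obtain ⟨p, hp, hpc⟩ := atom_below_compact hc hc0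
  exact ⟨p, hp, hpc.trans hcx⟩

/-- The lattice is atomistic. -/
lemma atomistic (x : α) : x = sSup {p : α | IsAtom p ∧ p ≤ x} := by
  set A := sSup {p : α | IsAtom p ∧ p ≤ x} with hA
  have hAx : A ≤ x := sSup_le fun p hp => hp.2
  have hom := om hAx
  have hbot : Aᶜ ⊓ x = ⊥ := by
    by_contra h
    obtain ⟨p, hp, hple⟩ := exists_atom_le halg h
    have hpA : p ≤ A := le_sSup ⟨hp, hple.trans inf_le_right⟩
    have : p ≤ A ⊓ Aᶜ := le_inf hpA (hple.trans inf_le_left)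
    rw [icpl] at this
    exact hp.1 (le_bot_iff.mp this)
  rw [hbot, sup_bot_eq] at hom
  exact hom.symm

lemma exists_atom_not_le {s t : α} (h : ¬ s ≤ t) :
    ∃ p : α, IsAtom p ∧ p ≤ s ∧ ¬ p ≤ t := by
  by_contra hc
  push_neg at hc
  apply h
  conv_lhs => rw [atomistic halg s]
  exact sSup_le fun p hp => hc p hp.1 hp.2

/-- Every compact element is the sup of a finite set of atoms. -/
lemma compact_span {k : α} (hk : IsCompactElement k) :
    ∃ S : Finset α, (∀ q ∈ S, IsAtom q) ∧ S.sup id = k := by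
  obtain ⟨t, ht, hkt⟩ := (CompleteLattice.isCompactElement_iff_exists_le_sSup_of_le_sSup α k).mp hk {p : α | IsAtom p ∧ p ≤ k} (le_of_eq (atomistic halg k))
  refine ⟨t, fun q hq => (ht hq).1, le_antisymm (Finset.sup_le fun q hq => (ht hq).2) hkt⟩

lemma finset_compact_span (t : Finset α) (h : ∀ a ∈ t, IsCompactElement a) :
    ∃ S : Finset α, (∀ q ∈ S, IsAtom q) ∧ S.sup id = t.sup id := by
  classical
  induction t using Finset.induction_on with
  | empty => exact ⟨∅, by simp, by simp⟩
  | @insert a t' ha ih =>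
    obtain ⟨St, hSt1, hSt2⟩ := ih (fun b hb => h b (Finset.mem_insert_of_mem hb))
    obtain ⟨Sa, hSa1, hSa2⟩ := compact_span halg (h a (Finset.mem_insert_self a t'))
    refine ⟨Sa ∪ St, fun q hq => ?_, ?_⟩
    · rcases Finset.mem_union.mp hq with h' | h'
      · exact hSa1 q h'
      · exact hSt1 q h'
    · rw [Finset.sup_union, hSa2, hSt2, Finset.sup_insert, id]

end Algebraic

section Covering

variable [DecidableEq α] (hcov : ∀ p : α, IsAtom p → ∀ x : α, p ≤ x ∨ x ⋖ x ⊔ p)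

include hcov

omit [DecidableEq α] in
lemma cov_of_not_le {p w : α} (hp : IsAtom p) (h : ¬ p ≤ w) : w ⋖ w ⊔ p :=
  (hcov p hp w).resolve_left h

/-- Steinitz exchange. -/
lemma exchange : ∀ S : Finset α, (∀ q ∈ S, IsAtom q) → ∀ {x p : α}, IsAtom p →
    p ≤ x ⊔ S.sup id → ¬ p ≤ x →
    ∃ q ∈ S, x ⊔ (S.erase q).sup id ⊔ p = x ⊔ S.sup id := by
  intro S
  induction S using Finset.induction_on with
  | empty =>
    intro _ x p _ hple hnx
    rw [Finset.sup_empty, sup_bot_eq] at hple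
    exact absurd hple hnx
  | @insert q T hqT ih =>
    intro hS x p hp hple hnx
    by_cases hpT : p ≤ x ⊔ T.sup id
    · obtain ⟨q', hq'T, hq'⟩ := ih (fun r hr => hS r (Finset.mem_insert_of_mem hr)) hp hpT hnx
      refine ⟨q', Finset.mem_insert_of_mem hq'T, ?_⟩
      have hne : q' ≠ q := fun h => hqT (h ▸ hq'T)
      rw [Finset.erase_insert_of_ne hne.symm, Finset.sup_insert, Finset.sup_insert, id]
      calc x ⊔ (q ⊔ (T.erase q').sup id) ⊔ p
          = q ⊔ (x ⊔ (T.erase q').sup id ⊔ p) := by ac_rfl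
        _ = q ⊔ (x ⊔ T.sup id) := by rw [hq']
        _ = x ⊔ (id q ⊔ T.sup id) := by rw [id]; ac_rfl
    · refine ⟨q, Finset.mem_insert_self q T, ?_⟩
      rw [Finset.erase_insert hqT, Finset.sup_insert, id]
      rw [Finset.sup_insert, id] at hple
      have hpw : p ≤ (x ⊔ T.sup id) ⊔ q := by
        rw [show (x ⊔ T.sup id) ⊔ q = x ⊔ (q ⊔ T.sup id) by ac_rfl]
        exact hple
      have hqw : ¬ q ≤ x ⊔ T.sup id := fun h => hpT (hpw.trans (sup_le le_rfl h))
      have cover := cov_of_not_le hcov (hS q (Finset.mem_insert_self q T)) hqw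
      have hlt : x ⊔ T.sup id < (x ⊔ T.sup id) ⊔ p := left_lt_sup.mpr hpT
      have heq : (x ⊔ T.sup id) ⊔ p = (x ⊔ T.sup id) ⊔ q :=
        covBy_eq cover hlt (sup_le le_sup_left hpw)
      rw [heq]
      ac_rfl

end Covering

section Star

variable (C : α)

/-- Relative orthocomplement in the interval `[⊥, C]`. -/
def star (x : α) : α := xᶜ ⊓ C

lemma star_le (x : α) : star C x ≤ C := inf_le_right

lemma star_star {x : α} (hx : x ≤ C) : star C (star C x) = x := by
  have h : (xᶜ ⊓ C)ᶜ = x ⊔ Cᶜ := by rw [demorgan_inf, cc]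
  show (xᶜ ⊓ C)ᶜ ⊓ C = x
  rw [h, inf_comm (x ⊔ Cᶜ) C, sup_comm x Cᶜ]
  exact omd hx

lemma star_anti {x y : α} (h : x ≤ y) : star C y ≤ star C x :=
  inf_le_inf_right C (canti h)

lemma star_lt {x y : α} (hxy : x < y) (hy : y ≤ C) : star C y < star C x := by
  refine lt_of_le_of_ne (star_anti C hxy.le) fun h => ?_
  have h2 := congrArg (star C) h
  rw [star_star C (hxy.le.trans hy), star_star C hy] at h2
  exact hxy.ne h2.symm

lemma le_star_iff {p s : α} (hp : p ≤ C) (hs : s ≤ C) :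
    p ≤ star C s ↔ s ≤ star C p := by
  constructor
  · intro h
    exact le_inf (flip1 (h.trans inf_le_left)) hs
  · intro h
    exact le_inf (flip1 (h.trans inf_le_left)) hp

lemma star_sup (x p : α) : star C (x ⊔ p) = star C x ⊓ star C p := by
  show (x ⊔ p)ᶜ ⊓ C = (xᶜ ⊓ C) ⊓ (pᶜ ⊓ C)
  rw [demorgan_sup]
  apply le_antisymm
  · exact le_inf (inf_le_inf_right C inf_le_left) (inf_le_inf_right C inf_le_right)
  · exact le_inf (le_inf (inf_le_left.trans inf_le_left) (inf_le_right.trans inf_le_left))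
      (inf_le_left.trans inf_le_right)

lemma star_covBy {a b : α} (ha : a ≤ C) (hb : b ≤ C) (h : a ⋖ b) :
    star C b ⋖ star C a := by
  refine ⟨star_lt C h.lt hb, fun c hc1 hc2 => ?_⟩
  have hcC : c ≤ C := hc2.le.trans (star_le C a)
  have h1 : a < star C c := by
    have := star_lt C hc2 (star_le C a)
    rwa [star_star C ha] at this
  have h2 : star C c < b := by
    have := star_lt C hc1 hcC
    rwa [star_star C hb] at this
  exact h.2 h1 h2

end Star

section Core

variable [DecidableEq α]
variable (halg : IsAlgebraicLattice α)
variable (hcov : ∀ p : α, IsAtom p → ∀ x : α, p ≤ x ∨ x ⋖ x ⊔ p)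
variable (C : α) (SC : Finset α)
variable (hSCa : ∀ q ∈ SC, IsAtom q) (hSCs : SC.sup id = C)

include hcov in
lemma dual_cov {s p : α} (hs : s ≤ C) (hp : IsAtom p) (hpC : p ≤ C)
    (hns : ¬ s ≤ star C p) : s ⊓ star C p ⋖ s := by
  have hps : ¬ p ≤ star C s := fun h => hns ((le_star_iff C hpC hs).mp h)
  have cov : star C s ⋖ star C s ⊔ p := cov_of_not_le hcov hp hps
  have h2 := star_covBy C (star_le C s) (sup_le (star_le C s) hpC) cov
  rwa [star_sup, star_star C hs] at h2

/-- corank relative to C: smallest number of atoms needed to fill up to C. -/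
noncomputable def crk (C x : α) : ℕ :=
  sInf {n | ∃ S : Finset α, (∀ q ∈ S, IsAtom q) ∧ x ⊔ S.sup id = C ∧ S.card = n}

include hSCa hSCs in
lemma crk_exists {x : α} (hx : x ≤ C) :
    ∃ S : Finset α, (∀ q ∈ S, IsAtom q) ∧ x ⊔ S.sup id = C ∧ S.card = crk C x :=
  Nat.sInf_mem (⟨SC.card, SC, hSCa, by rw [hSCs]; exact sup_eq_right.mpr hx, rfl⟩ :
    Set.Nonempty {n | ∃ S : Finset α, (∀ q ∈ S, IsAtom q) ∧ x ⊔ S.sup id = C ∧ S.card = n})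

lemma crk_le {x : α} {S : Finset α} (h1 : ∀ q ∈ S, IsAtom q) (h2 : x ⊔ S.sup id = C) :
    crk C x ≤ S.card :=
  Nat.sInf_le ⟨S, h1, h2, rfl⟩

include hSCa hSCs in
lemma crk_mono {x y : α} (hxy : x ≤ y) (hy : y ≤ C) : crk C y ≤ crk C x := by
  obtain ⟨S, hS1, hS2, hS3⟩ := crk_exists C SC hSCa hSCs (hxy.trans hy)
  rw [← hS3]
  exact crk_le C hS1
    (le_antisymm (sup_le hy (le_sup_right.trans hS2.le)) (hS2 ▸ sup_le_sup_right hxy _))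

include halg hcov hSCa hSCs in
lemma crk_strict {x y : α} (hxy : x < y) (hy : y ≤ C) : crk C y < crk C x := by
  obtain ⟨S, hS1, hS2, hS3⟩ := crk_exists C SC hSCa hSCs (hxy.le.trans hy)
  obtain ⟨p, hp1, hp2, hp3⟩ := exists_atom_not_le halg (fun h => hxy.not_ge h)
  have hpC : p ≤ x ⊔ S.sup id := by rw [hS2]; exact hp2.trans hy
  obtain ⟨q, hqS, hq⟩ := exchange hcov S hS1 hp1 hpC hp3
  have key : y ⊔ (S.erase q).sup id = C := by
    apply le_antisymm
    · exact sup_le hy ((Finset.sup_mono (Finset.erase_subset q S)).trans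
        (le_sup_right.trans hS2.le))
    · rw [← hS2, ← hq]
      exact sup_le (sup_le (hxy.le.trans le_sup_left) le_sup_right) (hp2.trans le_sup_left)
  have hle : crk C y ≤ (S.erase q).card :=
    crk_le C (fun r hr => hS1 r (Finset.mem_of_mem_erase hr)) key
  rw [Finset.card_erase_of_mem hqS] at hle
  have hq0 : 0 < S.card := Finset.card_pos.mpr ⟨q, hqS⟩
  omega

include hSCa hSCs in
lemma crk_sup_atom {x p : α} (hx : x ≤ C) (hp : IsAtom p) (hpC : p ≤ C) :
    crk C x ≤ crk C (x ⊔ p) + 1 := by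
  obtain ⟨S, h1, h2, h3⟩ := crk_exists C SC hSCa hSCs (sup_le hx hpC)
  have key : x ⊔ (insert p S).sup id = C := by
    rw [Finset.sup_insert, id, ← sup_assoc, h2]
  calc crk C x ≤ (insert p S).card := crk_le C (fun q hq => by
        rcases Finset.mem_insert.mp hq with h | h
        · exact h ▸ hp
        · exact h1 q h) key
    _ ≤ S.card + 1 := Finset.card_insert_le p S
    _ = crk C (x ⊔ p) + 1 := by rw [h3]

include halg hcov hSCa hSCs in
lemma SM : ∀ (N : ℕ) (u v : α), u ≤ C → v ≤ C → crk C (u ⊓ v) ≤ N →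
    crk C u + crk C v ≤ crk C (u ⊓ v) + crk C (u ⊔ v) := by
  intro N
  induction N with
  | zero =>
    intro u v hu hv hN
    obtain ⟨S, h1, h2, h3⟩ := crk_exists C SC hSCa hSCs (inf_le_left.trans hu)
    have h0 : crk C (u ⊓ v) = 0 := Nat.le_zero.mp hN
    have hS : S = ∅ := Finset.card_eq_zero.mp (h3.trans h0)
    rw [hS, Finset.sup_empty, sup_bot_eq] at h2
    have hu' : u = C := le_antisymm hu (h2 ▸ inf_le_left)
    have hv' : v = C := le_antisymm hv (h2 ▸ inf_le_right)
    rw [hu', hv', inf_idem, sup_idem]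
  | succ N ih =>
    intro u v hu hv hN
    by_cases huv : u ≤ v
    · rw [inf_eq_left.mpr huv, sup_eq_right.mpr huv]
    · have hnle : ¬ u ≤ u ⊓ v := fun h => huv (h.trans inf_le_right)
      obtain ⟨p, hp, hpu, hpnuv⟩ := exists_atom_not_le halg hnle
      have hpC : p ≤ C := hpu.trans hu
      have cov : u ⊓ v ⋖ (u ⊓ v) ⊔ p := cov_of_not_le hcov hp hpnuv
      have hwle : (u ⊓ v) ⊔ p ≤ u ⊓ (v ⊔ p) :=
        le_inf (sup_le inf_le_left hpu)
          (sup_le (inf_le_right.trans le_sup_left) le_sup_right)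
      have h1 : crk C (u ⊓ (v ⊔ p)) ≤ crk C ((u ⊓ v) ⊔ p) :=
        crk_mono C SC hSCa hSCs hwle (inf_le_left.trans hu)
      have h2 : crk C ((u ⊓ v) ⊔ p) < crk C (u ⊓ v) :=
        crk_strict halg hcov C SC hSCa hSCs cov.lt
          (sup_le (inf_le_left.trans hu) hpC)
      have hsup : u ⊔ (v ⊔ p) = u ⊔ v :=
        le_antisymm (sup_le le_sup_left (sup_le le_sup_right (hpu.trans le_sup_left)))
          (sup_le_sup_left le_sup_left u)
      have ihh := ih u (v ⊔ p) hu (sup_le hv hpC) (by omega)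
      rw [hsup] at ihh
      have h4 : crk C v ≤ crk C (v ⊔ p) + 1 := crk_sup_atom C SC hSCa hSCs hv hp hpC
      omega

include halg hcov hSCa hSCs in
lemma Sm : ∀ (N : ℕ) (u v : α), u ≤ C → v ≤ C → crk C u ≤ crk C (u ⊔ v) + N →
    crk C (u ⊓ v) + crk C (u ⊔ v) ≤ crk C u + crk C v := by
  intro N
  induction N with
  | zero =>
    intro u v hu hv hN
    by_cases hvu : v ≤ u
    · rw [inf_eq_right.mpr hvu, sup_eq_left.mpr hvu]
      omega
    · exfalso
      have hlt : u < u ⊔ v := left_lt_sup.mpr hvu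
      have := crk_strict halg hcov C SC hSCa hSCs hlt (sup_le hu hv)
      omega
  | succ N ih =>
    intro u v hu hv hN
    by_cases hvu : v ≤ u
    · rw [inf_eq_right.mpr hvu, sup_eq_left.mpr hvu]
      omega
    · have htC : u ⊔ v ≤ C := sup_le hu hv
      have hlt : u < u ⊔ v := left_lt_sup.mpr hvu
      have hns : ¬ star C u ≤ star C (u ⊔ v) := by
        intro h
        have heq : star C u = star C (u ⊔ v) :=
          le_antisymm h (star_anti C le_sup_left)
        have h2 := congrArg (star C) heq
        rw [star_star C hu, star_star C htC] at h2
        exact hlt.ne h2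
      obtain ⟨p, hp, hpu, hpt⟩ := exists_atom_not_le halg hns
      have hpC : p ≤ C := hpu.trans (star_le C u)
      have hum : u ≤ star C p := (le_star_iff C hu hpC).mpr hpu
      have htm : ¬ u ⊔ v ≤ star C p := fun h => hpt ((le_star_iff C htC hpC).mp h)
      have hvm : ¬ v ≤ star C p := fun h => htm (sup_le hum h)
      have covv : v ⊓ star C p ⋖ v := dual_cov hcov C hv hp hpC hvm
      have covt : (u ⊔ v) ⊓ star C p ⋖ u ⊔ v := dual_cov hcov C htC hp hpC htm
      have hv'C : v ⊓ star C p ≤ C := inf_le_left.trans hv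
      have hjoin : u ⊔ (v ⊓ star C p) ≤ (u ⊔ v) ⊓ star C p :=
        sup_le (le_inf le_sup_left hum)
          (le_inf (inf_le_left.trans le_sup_right) inf_le_right)
      have hinf : u ⊓ (v ⊓ star C p) = u ⊓ v :=
        le_antisymm (inf_le_inf_left u inf_le_left)
          (le_inf inf_le_left (le_inf inf_le_right ((inf_le_left (a := u) (b := v)).trans hum)))
      have e1 : crk C (u ⊔ v) < crk C ((u ⊔ v) ⊓ star C p) :=
        crk_strict halg hcov C SC hSCa hSCs covt.lt htC
      have e2 : crk C ((u ⊔ v) ⊓ star C p) ≤ crk C (u ⊔ (v ⊓ star C p)) :=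
        crk_mono C SC hSCa hSCs hjoin (inf_le_left.trans htC)
      have e3 : crk C v < crk C (v ⊓ star C p) :=
        crk_strict halg hcov C SC hSCa hSCs covv.lt hv
      have e4 : crk C (v ⊓ star C p) ≤ crk C v + 1 := by
        obtain ⟨q, hq, hqv, hqn⟩ := exists_atom_not_le halg covv.lt.not_ge
        have heq : (v ⊓ star C p) ⊔ q = v :=
          covBy_eq covv (left_lt_sup.mpr hqn) (sup_le covv.lt.le hqv)
        calc crk C (v ⊓ star C p) ≤ crk C ((v ⊓ star C p) ⊔ q) + 1 :=
              crk_sup_atom C SC hSCa hSCs hv'C hq (hqv.trans hv)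
          _ = crk C v + 1 := by rw [heq]
      have ihh := ih u (v ⊓ star C p) hu hv'C (by omega)
      rw [hinf] at ihh
      omega

include halg hcov hSCa hSCs in
lemma finmod {x y z : α} (hx : x ≤ C) (hy : y ≤ C) (hz : z ≤ C) (hxz : x ≤ z) :
    (x ⊔ y) ⊓ z ≤ x ⊔ (y ⊓ z) := by
  have hxyC : x ⊔ y ≤ C := sup_le hx hy
  have S1 := SM halg hcov C SC hSCa hSCs (crk C ((x ⊔ y) ⊓ z)) (x ⊔ y) z hxyC hz le_rfl
  have e1 : (x ⊔ y) ⊔ z = y ⊔ z := by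
    rw [sup_assoc, sup_comm y z, ← sup_assoc, sup_eq_right.mpr hxz, sup_comm z y]
  rw [e1] at S1
  have S2 := SM halg hcov C SC hSCa hSCs (crk C (x ⊓ y)) x y hx hy le_rfl
  have S3 := Sm halg hcov C SC hSCa hSCs (crk C x) x (y ⊓ z) hx (inf_le_left.trans hy)
    (Nat.le_add_left _ _)
  have e2 : x ⊓ (y ⊓ z) = x ⊓ y :=
    le_antisymm (inf_le_inf_left x inf_le_left)
      (le_inf inf_le_left (le_inf inf_le_right ((inf_le_left (a := x) (b := y)).trans hxz)))
  rw [e2] at S3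
  have S4 := Sm halg hcov C SC hSCa hSCs (crk C y) y z hy hz (Nat.le_add_left _ _)
  have hab : x ⊔ (y ⊓ z) ≤ (x ⊔ y) ⊓ z :=
    le_inf (sup_le le_sup_left (inf_le_left.trans le_sup_right)) (sup_le hxz inf_le_right)
  by_contra hc
  have hlt : x ⊔ (y ⊓ z) < (x ⊔ y) ⊓ z := lt_of_le_of_ne hab fun h => hc h.ge
  have hfin := crk_strict halg hcov C SC hSCa hSCs hlt (inf_le_right.trans hz)
  omega

end Core

end OMLHelper

open OMLHelper in
/-- every algebraic complete OML with the covering property is modular. -/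
theorem algebraic_covering_completeOML_modular {α : Type*} [CompleteOML α]
    (halg : IsAlgebraicLattice α)
    (hcov : ∀ p : α, IsAtom p → ∀ x : α, p ≤ x ∨ x ⋖ x ⊔ p) :
    ∀ x y z : α, x ≤ z → x ⊔ (y ⊓ z) = (x ⊔ y) ⊓ z := by
  classical
  intro x y z hxz
  refine le_antisymm
    (le_inf (sup_le le_sup_left (inf_le_left.trans le_sup_right)) (sup_le hxz inf_le_right)) ?_
  conv_lhs => rw [atomistic halg ((x ⊔ y) ⊓ z)]
  apply sSup_le
  rintro p ⟨hp, hple⟩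
  have hpc : IsCompactElement p := atom_compact halg hp
  have hpxy : p ≤ x ⊔ y := hple.trans inf_le_left
  have hpz : p ≤ z := hple.trans inf_le_right
  -- decompose x ⊔ y into compact pieces
  have hsSup : sSup {k : α | IsCompactElement k ∧ (k ≤ x ∨ k ≤ y)} = x ⊔ y := by
    apply le_antisymm
    · apply sSup_le
      rintro k ⟨-, hk⟩
      rcases hk with hk | hk
      · exact hk.trans le_sup_left
      · exact hk.trans le_sup_right
    · apply sup_le
      · conv_lhs => rw [halg x]
        exact sSup_le_sSup fun c hc => ⟨hc.1, Or.inl hc.2⟩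
      · conv_lhs => rw [halg y]
        exact sSup_le_sSup fun c hc => ⟨hc.1, Or.inr hc.2⟩
  rw [← hsSup] at hpxy
  obtain ⟨t, ht, hpt⟩ := (CompleteLattice.isCompactElement_iff_exists_le_sSup_of_le_sSup α p).mp hpc _ hpxy
  set tx := t.filter (fun a => a ≤ x) with htx
  set ty := t.filter (fun a => ¬ a ≤ x) with hty
  have hkx : tx.sup id ≤ x := Finset.sup_le fun a ha => (Finset.mem_filter.mp ha).2
  have hky : ty.sup id ≤ y := by
    apply Finset.sup_le
    intro a ha
    have h1 := Finset.mem_filter.mp ha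
    have h2 := ht h1.1
    exact h2.2.resolve_left h1.2
  have hpk : p ≤ tx.sup id ⊔ ty.sup id := by
    refine hpt.trans (Finset.sup_le fun a ha => ?_)
    by_cases h : a ≤ x
    · exact (Finset.le_sup (f := id) (show a ∈ tx from Finset.mem_filter.mpr ⟨ha, h⟩)).trans
        le_sup_left
    · exact (Finset.le_sup (f := id) (show a ∈ ty from Finset.mem_filter.mpr ⟨ha, h⟩)).trans
        le_sup_right
  obtain ⟨Sx, hSx1, hSx2⟩ := finset_compact_span halg tx
    (fun a ha => (ht (Finset.mem_filter.mp ha).1).1)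
  obtain ⟨Sy, hSy1, hSy2⟩ := finset_compact_span halg ty
    (fun a ha => (ht (Finset.mem_filter.mp ha).1).1)
  set kx := tx.sup id
  set ky := ty.sup id
  set C := kx ⊔ (ky ⊔ p) with hC
  set SC := Sx ∪ (Sy ∪ {p}) with hSC
  have hSCa : ∀ q ∈ SC, IsAtom q := by
    intro q hq
    rcases Finset.mem_union.mp hq with h | h
    · exact hSx1 q h
    · rcases Finset.mem_union.mp h with h | h
      · exact hSy1 q h
      · exact (Finset.mem_singleton.mp h) ▸ hp
  have hSCs : SC.sup id = C := by
    rw [hSC, Finset.sup_union, Finset.sup_union, Finset.sup_singleton, hSx2, hSy2, id, hC]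
  have hkxC : kx ≤ C := le_sup_left
  have hkyC : ky ≤ C := le_sup_right.trans' le_sup_left
  have hpC : p ≤ C := le_sup_right.trans' le_sup_right
  have key := finmod halg hcov C SC hSCa hSCs (x := kx) (y := ky) (z := z ⊓ C)
    hkxC hkyC inf_le_right (le_inf (hkx.trans hxz) hkxC)
  have hpin : p ≤ (kx ⊔ ky) ⊓ (z ⊓ C) := le_inf hpk (le_inf hpz hpC)
  have := hpin.trans key
  refine this.trans (sup_le (hkx.trans le_sup_left) ?_)
  exact (le_inf (inf_le_left.trans hky) (inf_le_right.trans inf_le_left)).trans le_sup_right
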